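/- Define F(x) = exp(-2πλ_R (x - ∫_0^x exp(-2λ_S √(x² - r²)) dr)) for x ≥ 0. Then F is differentiable on (0,∞) and -F'(x) = 2πλ_R exp(-2πλ_R (x - ∫_0^x exp(-2λ_S √(x²-r²)) dr)) · 2λ_S x ∫_0^x exp(-2λ_S √(x²-r²)) / √(x²-r²) dr, provided the latter integral converges (which it does, being dominated near r = x by an integrable singularity). -/

import Mathlib

open MeasureTheory intervalIntegral

lemma cov1 (lamS y : ℝ) (hy : 0 < y) :
    (∫ r in (0:ℝ)..y, Real.exp (-(2 * lamS * Real.sqrt (y ^ 2 - r ^ 2)))) =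
      y * ∫ s in (0:ℝ)..1, Real.exp (-(2 * lamS * (y * Real.sqrt (1 - s ^ 2)))) := by
  have hpt : ∀ s : ℝ, Real.sqrt (y ^ 2 - (y * s) ^ 2) = y * Real.sqrt (1 - s ^ 2) := by
    intro s
    rw [show y ^ 2 - (y * s) ^ 2 = y ^ 2 * (1 - s ^ 2) by ring,
      Real.sqrt_mul (sq_nonneg y), Real.sqrt_sq hy.le]
  have h1 := intervalIntegral.integral_comp_mul_left (a := (0:ℝ)) (b := 1)
    (fun r => Real.exp (-(2 * lamS * Real.sqrt (y ^ 2 - r ^ 2)))) hy.ne'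
  simp only [mul_zero, mul_one, smul_eq_mul, hpt, mul_assoc] at h1
  simp only [mul_assoc]
  rw [h1]
  field_simp

lemma cov2_int (lamS x : ℝ) (hx : 0 < x)
    (hint : IntervalIntegrable
      (fun r => Real.exp (-(2 * lamS * Real.sqrt (x ^ 2 - r ^ 2))) / Real.sqrt (x ^ 2 - r ^ 2))
      volume 0 x) :
    IntervalIntegrable
      (fun s => Real.exp (-(2 * lamS * (x * Real.sqrt (1 - s ^ 2)))) / Real.sqrt (1 - s ^ 2))
      volume 0 1 := by
  have hpt : ∀ s : ℝ, Real.sqrt (x ^ 2 - (x * s) ^ 2) = x * Real.sqrt (1 - s ^ 2) := by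
    intro s
    rw [show x ^ 2 - (x * s) ^ 2 = x ^ 2 * (1 - s ^ 2) by ring,
      Real.sqrt_mul (sq_nonneg x), Real.sqrt_sq hx.le]
  have h1 := (hint.comp_mul_left (c := x)).const_mul x
  rw [zero_div, div_self hx.ne'] at h1
  convert h1 using 2 with s
  rw [hpt, mul_assoc, ← mul_div_mul_left
    (Real.exp (-(2 * (lamS * (x * Real.sqrt (1 - s ^ 2)))))) (Real.sqrt (1 - s ^ 2)) hx.ne']
  ring

lemma cov2 (lamS x : ℝ) (hx : 0 < x) :
    (∫ r in (0:ℝ)..x,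
        Real.exp (-(2 * lamS * Real.sqrt (x ^ 2 - r ^ 2))) / Real.sqrt (x ^ 2 - r ^ 2)) =
      ∫ s in (0:ℝ)..1,
        Real.exp (-(2 * lamS * (x * Real.sqrt (1 - s ^ 2)))) / Real.sqrt (1 - s ^ 2) := by
  have hpt : ∀ s : ℝ, Real.sqrt (x ^ 2 - (x * s) ^ 2) = x * Real.sqrt (1 - s ^ 2) := by
    intro s
    rw [show x ^ 2 - (x * s) ^ 2 = x ^ 2 * (1 - s ^ 2) by ring,
      Real.sqrt_mul (sq_nonneg x), Real.sqrt_sq hx.le]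
  have h1 := intervalIntegral.integral_comp_mul_left (a := (0:ℝ)) (b := 1)
    (fun r => Real.exp (-(2 * lamS * Real.sqrt (x ^ 2 - r ^ 2))) / Real.sqrt (x ^ 2 - r ^ 2))
    hx.ne'
  simp only [mul_zero, mul_one, smul_eq_mul, hpt, mul_assoc] at h1
  simp only [mul_assoc]
  rw [show (∫ s in (0:ℝ)..1,
      Real.exp (-(2 * (lamS * (x * Real.sqrt (1 - s ^ 2))))) / Real.sqrt (1 - s ^ 2)) =
      ∫ s in (0:ℝ)..1, x * (Real.exp (-(2 * (lamS * (x * Real.sqrt (1 - s ^ 2))))) /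
        (x * Real.sqrt (1 - s ^ 2))) from ?_, intervalIntegral.integral_const_mul, h1]
  · field_simp
  · congr 1 with s
    rw [mul_div_assoc']
    rw [mul_div_mul_left _ _ hx.ne']

lemma i4_int (lamS x : ℝ)
    (hint1 : IntervalIntegrable
      (fun s => Real.exp (-(2 * lamS * (x * Real.sqrt (1 - s ^ 2)))) / Real.sqrt (1 - s ^ 2))
      volume 0 1) :
    IntervalIntegrable
      (fun s => s ^ 2 / Real.sqrt (1 - s ^ 2) *
        Real.exp (-(2 * lamS * (x * Real.sqrt (1 - s ^ 2))))) volume 0 1 := by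
  apply hint1.mono_fun
  · apply Measurable.aestronglyMeasurable
    fun_prop
  · rw [Filter.EventuallyLE, ae_restrict_iff' measurableSet_uIoc]
    filter_upwards with s hs
    rw [Set.uIoc_of_le zero_le_one] at hs
    have h1 : (0:ℝ) ≤ s := hs.1.le
    have h2 : s ≤ 1 := hs.2
    have hE : 0 < Real.exp (-(2 * lamS * (x * Real.sqrt (1 - s ^ 2)))) := Real.exp_pos _
    have hsq : 0 ≤ Real.sqrt (1 - s ^ 2) := Real.sqrt_nonneg _
    simp only [Real.norm_eq_abs]
    rw [abs_of_nonneg (by positivity), abs_of_nonneg (by positivity)]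
    rw [div_mul_eq_mul_div, mul_comm, mul_div_assoc]
    calc Real.exp (-(2 * lamS * (x * Real.sqrt (1 - s ^ 2)))) * (s ^ 2 / Real.sqrt (1 - s ^ 2))
        ≤ Real.exp (-(2 * lamS * (x * Real.sqrt (1 - s ^ 2)))) * (1 / Real.sqrt (1 - s ^ 2)) := by
          gcongr
          nlinarith
      _ = _ := by rw [mul_one_div, div_eq_mul_inv, mul_comm]

lemma ftc_key (lamS x : ℝ) (hx : 0 < x)
    (hint1 : IntervalIntegrable
      (fun s => Real.exp (-(2 * lamS * (x * Real.sqrt (1 - s ^ 2)))) / Real.sqrt (1 - s ^ 2))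
      volume 0 1) :
    (∫ s in (0:ℝ)..1, Real.exp (-(2 * lamS * (x * Real.sqrt (1 - s ^ 2))))) +
      (2 * lamS * x) * ∫ s in (0:ℝ)..1,
        s ^ 2 / Real.sqrt (1 - s ^ 2) * Real.exp (-(2 * lamS * (x * Real.sqrt (1 - s ^ 2)))) =
      1 := by
  set u : ℝ → ℝ := fun s => s * Real.exp (-(2 * lamS * (x * Real.sqrt (1 - s ^ 2)))) with hu
  have hEcont : Continuous fun s : ℝ => Real.exp (-(2 * lamS * (x * Real.sqrt (1 - s ^ 2)))) := by
    fun_prop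
  have hucont : ContinuousOn u (Set.Icc 0 1) := (continuous_id.mul hEcont).continuousOn
  have hderiv : ∀ s ∈ Set.Ioo (0:ℝ) 1, HasDerivWithinAt u
      (Real.exp (-(2 * lamS * (x * Real.sqrt (1 - s ^ 2)))) +
        2 * lamS * x * (s ^ 2 / Real.sqrt (1 - s ^ 2) *
          Real.exp (-(2 * lamS * (x * Real.sqrt (1 - s ^ 2)))))) (Set.Ioi s) s := by
    intro s hs
    have h1s : 0 < 1 - s ^ 2 := by nlinarith [hs.1, hs.2]
    have hsq : Real.sqrt (1 - s ^ 2) ≠ 0 := (Real.sqrt_pos.mpr h1s).ne'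
    have hsq2 : Real.sqrt (1 - s ^ 2) ^ 2 = 1 - s ^ 2 := Real.sq_sqrt h1s.le
    have hd1 : HasDerivAt (fun s : ℝ => 1 - s ^ 2) (-(2 * s)) s := by
      simpa using (hasDerivAt_pow 2 s).const_sub 1
    have hd2 : HasDerivAt (fun s : ℝ => Real.sqrt (1 - s ^ 2))
        (1 / (2 * Real.sqrt (1 - s ^ 2)) * (-(2 * s))) s :=
      (Real.hasDerivAt_sqrt h1s.ne').comp s hd1
    have hd3 := (((hd2.const_mul x).const_mul (2 * lamS)).neg).exp
    have hd5 := (hasDerivAt_id s).mul hd3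
    apply HasDerivAt.hasDerivWithinAt
    refine hd5.congr_deriv ?_
    simp only [Pi.neg_apply, id]
    field_simp
  have hint' : IntervalIntegrable (fun s =>
      Real.exp (-(2 * lamS * (x * Real.sqrt (1 - s ^ 2)))) +
        2 * lamS * x * (s ^ 2 / Real.sqrt (1 - s ^ 2) *
          Real.exp (-(2 * lamS * (x * Real.sqrt (1 - s ^ 2)))))) volume 0 1 :=
    (hEcont.intervalIntegrable 0 1).add ((i4_int lamS x hint1).const_mul _)
  have key := integral_eq_sub_of_hasDeriv_right_of_le zero_le_one hucont hderiv hint'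
  rw [integral_add (hEcont.intervalIntegrable 0 1) ((i4_int lamS x hint1).const_mul _),
    intervalIntegral.integral_const_mul] at key
  rw [key, hu]
  norm_num

lemma identA (lamS x : ℝ)
    (hint1 : IntervalIntegrable
      (fun s => Real.exp (-(2 * lamS * (x * Real.sqrt (1 - s ^ 2)))) / Real.sqrt (1 - s ^ 2))
      volume 0 1) :
    (∫ s in (0:ℝ)..1,
        Real.exp (-(2 * lamS * (x * Real.sqrt (1 - s ^ 2)))) / Real.sqrt (1 - s ^ 2)) =
      (∫ s in (0:ℝ)..1,
        s ^ 2 / Real.sqrt (1 - s ^ 2) * Real.exp (-(2 * lamS * (x * Real.sqrt (1 - s ^ 2))))) +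
      ∫ s in (0:ℝ)..1,
        Real.sqrt (1 - s ^ 2) * Real.exp (-(2 * lamS * (x * Real.sqrt (1 - s ^ 2)))) := by
  have hcont : Continuous fun s : ℝ =>
      Real.sqrt (1 - s ^ 2) * Real.exp (-(2 * lamS * (x * Real.sqrt (1 - s ^ 2)))) := by
    fun_prop
  rw [← integral_add (i4_int lamS x hint1) (hcont.intervalIntegrable 0 1)]
  apply integral_congr
  intro s hs
  rw [Set.uIcc_of_le zero_le_one] at hs
  have h1s : (0:ℝ) ≤ 1 - s ^ 2 := by nlinarith [hs.1, hs.2]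
  have hsq2 : Real.sqrt (1 - s ^ 2) ^ 2 = 1 - s ^ 2 := Real.sq_sqrt h1s
  rcases eq_or_ne (Real.sqrt (1 - s ^ 2)) 0 with ht | ht
  · simp [ht]
  · field_simp
    nlinarith [Real.exp_pos (-(2 * lamS * (x * Real.sqrt (1 - s ^ 2))))]

lemma hKderiv (lamS x : ℝ) (hS : 0 < lamS) :
    HasDerivAt (fun y => ∫ s in (0:ℝ)..1,
        (1 - Real.exp (-(2 * lamS * (y * Real.sqrt (1 - s ^ 2))))))
      (∫ s in (0:ℝ)..1,
        2 * lamS * (Real.sqrt (1 - s ^ 2) *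
          Real.exp (-(2 * lamS * (x * Real.sqrt (1 - s ^ 2)))))) x := by
  have main := intervalIntegral.hasDerivAt_integral_of_dominated_loc_of_deriv_le
    (F := fun y s => (1 - Real.exp (-(2 * lamS * (y * Real.sqrt (1 - s ^ 2))))))
    (F' := fun y s => 2 * lamS * (Real.sqrt (1 - s ^ 2) *
      Real.exp (-(2 * lamS * (y * Real.sqrt (1 - s ^ 2))))))
    (x₀ := x) (a := (0:ℝ)) (b := 1) (μ := volume)
    (bound := fun _ => 2 * lamS * Real.exp (2 * lamS * (|x| + 1)))
    (Metric.ball_mem_nhds x one_pos) ?_ ?_ ?_ ?_ ?_ ?_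
  · exact main.2
  · filter_upwards with y
    apply Continuous.aestronglyMeasurable
    fun_prop
  · apply Continuous.intervalIntegrable
    fun_prop
  · apply Continuous.aestronglyMeasurable
    fun_prop
  · filter_upwards with s hs y hy
    rw [Set.uIoc_of_le zero_le_one] at hs
    rw [Metric.mem_ball, Real.dist_eq] at hy
    have hs1 : Real.sqrt (1 - s ^ 2) ≤ 1 := by
      apply Real.sqrt_le_one.mpr
      nlinarith [hs.1, hs.2]
    have hs0 : 0 ≤ Real.sqrt (1 - s ^ 2) := Real.sqrt_nonneg _
    have hexp : Real.exp (-(2 * lamS * (y * Real.sqrt (1 - s ^ 2)))) ≤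
        Real.exp (2 * lamS * (|x| + 1)) := by
      apply Real.exp_le_exp.mpr
      have h1 : |y| ≤ |x| + 1 := by
        have := abs_sub_abs_le_abs_sub y x
        linarith
      have h2 : -(2 * lamS * (y * Real.sqrt (1 - s ^ 2))) ≤
          2 * lamS * (|y| * Real.sqrt (1 - s ^ 2)) := by
        have h := mul_le_mul_of_nonneg_left (neg_le_abs y)
          (by positivity : (0:ℝ) ≤ 2 * lamS * Real.sqrt (1 - s ^ 2))
        nlinarith [h]
      have h3 : 2 * lamS * (|y| * Real.sqrt (1 - s ^ 2)) ≤ 2 * lamS * (|x| + 1) := by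
        apply mul_le_mul_of_nonneg_left _ (by positivity)
        calc |y| * Real.sqrt (1 - s ^ 2) ≤ |y| * 1 := by
              apply mul_le_mul_of_nonneg_left hs1 (abs_nonneg y)
          _ = |y| := mul_one _
          _ ≤ |x| + 1 := h1
      linarith
    rw [Real.norm_eq_abs, abs_of_nonneg (by positivity)]
    calc 2 * lamS * (Real.sqrt (1 - s ^ 2) *
          Real.exp (-(2 * lamS * (y * Real.sqrt (1 - s ^ 2)))))
        ≤ 2 * lamS * (1 * Real.exp (2 * lamS * (|x| + 1))) := by
          apply mul_le_mul_of_nonneg_left _ (by positivity)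
          apply mul_le_mul hs1 hexp (le_of_lt (Real.exp_pos _)) zero_le_one
      _ = 2 * lamS * Real.exp (2 * lamS * (|x| + 1)) := by ring
  · apply Continuous.intervalIntegrable
    fun_prop
  · filter_upwards with s hs y hy
    have hd1 : HasDerivAt (fun y : ℝ => y * Real.sqrt (1 - s ^ 2))
        (Real.sqrt (1 - s ^ 2)) y := hasDerivAt_mul_const _
    have hd2 := (((hd1.const_mul (2 * lamS)).neg).exp).const_sub 1
    refine hd2.congr_deriv ?_
    simp only [Pi.neg_apply]
    ring

/-- Differentiating the void-probability function
`F x = exp (-2 π lamR (x - ∫₀ˣ exp (-2 lamS √(x²-r²)) dr))`: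
`-F' x = 2 π lamR F x · 2 lamS x ∫₀ˣ exp (-2 lamS √(x²-r²)) / √(x²-r²) dr`,
provided the latter (singular) integral converges. -/
theorem stmt6 (lamR lamS : ℝ) (hR : 0 < lamR) (hS : 0 < lamS)
    (F : ℝ → ℝ)
    (hF : ∀ x : ℝ, F x = Real.exp (-(2 * Real.pi * lamR *
      (x - ∫ r in (0:ℝ)..x, Real.exp (-(2 * lamS * Real.sqrt (x ^ 2 - r ^ 2)))))))
    (x : ℝ) (hx : 0 < x)
    (hint : IntervalIntegrable
      (fun r => Real.exp (-(2 * lamS * Real.sqrt (x ^ 2 - r ^ 2))) / Real.sqrt (x ^ 2 - r ^ 2))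
      volume 0 x) :
    HasDerivAt F
      (-(2 * Real.pi * lamR *
          Real.exp (-(2 * Real.pi * lamR *
            (x - ∫ r in (0:ℝ)..x, Real.exp (-(2 * lamS * Real.sqrt (x ^ 2 - r ^ 2)))))) *
          (2 * lamS * x *
            ∫ r in (0:ℝ)..x,
              Real.exp (-(2 * lamS * Real.sqrt (x ^ 2 - r ^ 2))) / Real.sqrt (x ^ 2 - r ^ 2))))
      x := by
  have hint1 := cov2_int lamS x hx hint
  set K : ℝ → ℝ := fun y => ∫ s in (0:ℝ)..1,
      (1 - Real.exp (-(2 * lamS * (y * Real.sqrt (1 - s ^ 2))))) with hKdef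
  set D2 : ℝ := ∫ s in (0:ℝ)..1,
      2 * lamS * (Real.sqrt (1 - s ^ 2) *
        Real.exp (-(2 * lamS * (x * Real.sqrt (1 - s ^ 2))))) with hD2def
  have hK : HasDerivAt K D2 x := hKderiv lamS x hS
  have hG : HasDerivAt (fun y => y * K y) (1 * K x + x * D2) x := (hasDerivAt_id x).mul hK
  have hKval : ∀ y : ℝ, K y =
      1 - ∫ s in (0:ℝ)..1, Real.exp (-(2 * lamS * (y * Real.sqrt (1 - s ^ 2)))) := by
    intro y
    have hc : Continuous fun s : ℝ =>
        Real.exp (-(2 * lamS * (y * Real.sqrt (1 - s ^ 2)))) := by fun_prop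
    show (∫ s in (0:ℝ)..1, (1 - Real.exp (-(2 * lamS * (y * Real.sqrt (1 - s ^ 2)))))) = _
    rw [integral_sub (intervalIntegrable_const) (hc.intervalIntegrable 0 1)]
    simp
  have hGeq : ∀ y : ℝ, 0 < y →
      y - (∫ r in (0:ℝ)..y, Real.exp (-(2 * lamS * Real.sqrt (y ^ 2 - r ^ 2)))) = y * K y := by
    intro y hy
    rw [hKval y, cov1 lamS y hy]
    ring
  have hFeq : F =ᶠ[nhds x] fun y => Real.exp (-(2 * Real.pi * lamR * (y * K y))) := by
    filter_upwards [isOpen_Ioi.mem_nhds hx] with y hy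
    rw [hF y, hGeq y hy]
  have hD : HasDerivAt (fun y => Real.exp (-(2 * Real.pi * lamR * (y * K y))))
      (Real.exp (-(2 * Real.pi * lamR * (x * K x))) *
        (-(2 * Real.pi * lamR * (1 * K x + x * D2)))) x :=
    ((hG.const_mul (2 * Real.pi * lamR)).neg).exp
  have final := hD.congr_of_eventuallyEq hFeq
  have e1 := hGeq x hx
  have e2 : 1 * K x + x * D2 = 2 * lamS * x *
      ∫ r in (0:ℝ)..x,
        Real.exp (-(2 * lamS * Real.sqrt (x ^ 2 - r ^ 2))) / Real.sqrt (x ^ 2 - r ^ 2) := by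
    rw [cov2 lamS x hx, identA lamS x hint1, one_mul, hKval x, hD2def, intervalIntegral.integral_const_mul]
    have hf := ftc_key lamS x hx hint1
    linear_combination (-1 : ℝ) * hf
  refine final.congr_deriv ?_
  rw [e1, ← e2]
  ring
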